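/- Let v ∈ C° be generic, let σ ∈ Σ^max, write v = ∑_{i∈σ} s_i v_i (so that all s_i ≠ 0), let γ ∈ ℤ^r, and let γ_i ∈ [0,1) for i ∈ σ be the unique numbers with γ − ∑_{i∈σ} γ_i v_i ∈ ∑_{i∈σ} ℤ v_i. Then there is exactly one pair (c,d) of points of ℤ^r such that c + d = v_σ, c + γ ∈ ∑_{i∈σ} ℤ v_i, and for all sufficiently small ε > 0 both c + εv and d − εv lie in the interior of σ; it is given by c = ∑_{i∈σ, γ_i ≠ 0} (1 − γ_i) v_i + ∑_{i∈σ, γ_i = 0, s_i < 0} v_i and d = ∑_{i∈σ, γ_i ≠ 0} γ_i v_i + ∑_{i∈σ, γ_i = 0, s_i > 0} v_i. -/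

import Mathlib

open scoped BigOperators Classical

noncomputable section

namespace BBGKZ

/-- The real vector corresponding to the `i`-th integer vector `v i`. -/
def vR {r n : ℕ} (v : Fin n → Fin r → ℤ) (i : Fin n) : Fin r → ℝ := fun j => (v i j : ℝ)

/-- The complex vector corresponding to the `i`-th integer vector `v i`. -/
def vC {r n : ℕ} (v : Fin n → Fin r → ℤ) (i : Fin n) : Fin r → ℂ := fun j => (v i j : ℂ)

/-- The real vector corresponding to an integer vector. -/
def intVec {r : ℕ} (c : Fin r → ℤ) : Fin r → ℝ := fun j => (c j : ℝ)

/-- The complex vector corresponding to an integer vector. -/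
def intVecC {r : ℕ} (c : Fin r → ℤ) : Fin r → ℂ := fun j => (c j : ℂ)

/-- The cone `C = ∑ ℝ_{≥0} v_i`. -/
def coneC {r n : ℕ} (v : Fin n → Fin r → ℤ) : Set (Fin r → ℝ) :=
  {x | ∃ t : Fin n → ℝ, (∀ i, 0 ≤ t i) ∧ x = ∑ i, t i • vR v i}

/-- The cone `σ_I = ∑_{i ∈ I} ℝ_{≥0} v_i`. -/
def sigmaCone {r n : ℕ} (v : Fin n → Fin r → ℤ) (I : Finset (Fin n)) : Set (Fin r → ℝ) :=
  {x | ∃ t : Fin n → ℝ, (∀ i, 0 ≤ t i) ∧ (∀ i, i ∉ I → t i = 0) ∧ x = ∑ i, t i • vR v i}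

/-- `v_I = ∑_{i ∈ I} v_i`. -/
def vSum {r n : ℕ} (v : Fin n → Fin r → ℤ) (I : Finset (Fin n)) : Fin r → ℤ := ∑ i ∈ I, v i

/-- `Vol_I`: the absolute value of the determinant of the `r × r` matrix whose rows are the
vectors `v i`, `i ∈ I` (defined when `I.card = r`, and `0` otherwise). -/
def Vol {r n : ℕ} (v : Fin n → Fin r → ℤ) (I : Finset (Fin n)) : ℝ :=
  if h : I.card = r then
    |(Matrix.of fun a b : Fin r => vR v (I.orderIsoOfFin h a).1 b).det| else 0

/-- A vector of `ℝ^r` is generic if it lies in no proper linear subspace spanned by integer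
vectors. -/
def GenericVec {r : ℕ} (w : Fin r → ℝ) : Prop :=
  ∀ T : Set (Fin r → ℤ), Submodule.span ℝ (intVec '' T) ≠ ⊤ → w ∉ Submodule.span ℝ (intVec '' T)

/-- The value at `β ∈ ℂ^r` of the `ℂ`-linear extension of `μ : ℝ^r → ℝ`. -/
def muC {r : ℕ} (μ : (Fin r → ℝ) →ₗ[ℝ] ℝ) (β : Fin r → ℂ) : ℂ :=
  ∑ j, β j * (μ (Pi.single j 1) : ℂ)

/-- A solution of `bbGKZ(S, 0)` on `U`, where `S` is `C` or `C°`. -/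
def IsSol0 {r n : ℕ} (v : Fin n → Fin r → ℤ) (S : Set (Fin r → ℝ))
    (U : Set (Fin n → ℂ)) (Φ : (Fin r → ℤ) → (Fin n → ℂ) → ℂ) : Prop :=
  (∀ c : Fin r → ℤ, intVec c ∈ S → DifferentiableOn ℂ (Φ c) U) ∧
  (∀ c : Fin r → ℤ, intVec c ∈ S → ∀ i : Fin n, ∀ x ∈ U,
      fderiv ℂ (Φ c) x (Pi.single i 1) = Φ (c + v i) x) ∧
  (∀ c : Fin r → ℤ, intVec c ∈ S → ∀ μ : (Fin r → ℝ) →ₗ[ℝ] ℝ, ∀ x ∈ U,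
      (∑ i, (μ (vR v i) : ℂ) * x i * fderiv ℂ (Φ c) x (Pi.single i 1))
        + (μ (intVec c) : ℂ) * Φ c x = 0)

/-- A solution of `bbGKZ(S, β)` on `U`. -/
def IsSolBeta {r n : ℕ} (v : Fin n → Fin r → ℤ) (S : Set (Fin r → ℝ)) (β : Fin r → ℂ)
    (U : Set (Fin n → ℂ)) (Φ : (Fin r → ℤ) → (Fin n → ℂ) → ℂ) : Prop :=
  (∀ c : Fin r → ℤ, intVec c ∈ S → DifferentiableOn ℂ (Φ c) U) ∧
  (∀ c : Fin r → ℤ, intVec c ∈ S → ∀ i : Fin n, ∀ x ∈ U,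
      fderiv ℂ (Φ c) x (Pi.single i 1) = Φ (c + v i) x) ∧
  (∀ c : Fin r → ℤ, intVec c ∈ S → ∀ μ : (Fin r → ℝ) →ₗ[ℝ] ℝ, ∀ x ∈ U,
      (∑ i, (μ (vR v i) : ℂ) * x i * fderiv ℂ (Φ c) x (Pi.single i 1))
        + ((μ (intVec c) : ℂ) - muC μ β) * Φ c x = 0)

/-- The coefficients `ξ_{c,d,I}` determined by a generic vector `v0 ∈ C°`:
`ξ_{c,d,I} = (-1)^{deg c}` if `σ_I` is `r`-dimensional and for all sufficiently small `ε > 0`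
both `c + ε v0` and `d - ε v0` lie in the interior of `σ_I`, and `0` otherwise. -/
def xiCoef {r n : ℕ} (v : Fin n → Fin r → ℤ) (degZ : (Fin r → ℤ) → ℤ) (v0 : Fin r → ℝ)
    (c d : Fin r → ℤ) (I : Finset (Fin n)) : ℂ :=
  if intVec c ∈ coneC v ∧ intVec d ∈ interior (coneC v) ∧ c + d = vSum v I ∧ I.card = r ∧
      Submodule.span ℝ (vR v '' (I : Set (Fin n))) = ⊤ ∧
      (∀ᶠ ε in nhdsWithin (0 : ℝ) (Set.Ioi 0),
        intVec c + ε • v0 ∈ interior (sigmaCone v I) ∧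
        intVec d - ε • v0 ∈ interior (sigmaCone v I))
  then (-1 : ℂ) ^ (degZ c) else 0

/-- The pairing `⟨Φ, Ψ⟩ = ∑_{c,d,I} ξ_{c,d,I} Vol_I (∏_{i∈I} x_i) Φ_c Ψ_d`, where the
(finitely supported) inner sum is over lattice points `c ∈ C`, `d ∈ C°` with `c + d = v_I`. -/
def pairingXi {r n : ℕ} (v : Fin n → Fin r → ℤ)
    (ξ : (Fin r → ℤ) → (Fin r → ℤ) → Finset (Fin n) → ℂ)
    (Φ Ψ : (Fin r → ℤ) → (Fin n → ℂ) → ℂ) (x : Fin n → ℂ) : ℂ :=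
  ∑ I ∈ Finset.powersetCard r (Finset.univ : Finset (Fin n)),
    ∑ᶠ c : Fin r → ℤ,
      (if intVec c ∈ coneC v ∧ intVec (vSum v I - c) ∈ interior (coneC v) then
        ξ c (vSum v I - c) I * (Vol v I : ℂ) * (∏ i ∈ I, x i) * Φ c x * Ψ (vSum v I - c) x
      else 0)

/-- A finite simplicial fan supported on `C` with rays among the `v_i`, encoded by the finite
family of index sets of its cones. -/
structure IsFan {r n : ℕ} (v : Fin n → Fin r → ℤ) (Fam : Finset (Finset (Fin n))) : Prop where
  indep : ∀ I ∈ Fam, LinearIndependent ℝ (fun i : {x : Fin n // x ∈ I} => vR v i.1)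
  downward : ∀ I ∈ Fam, ∀ J : Finset (Fin n), J ⊆ I → J ∈ Fam
  inter : ∀ I ∈ Fam, ∀ J ∈ Fam, ∃ K ∈ Fam, K ⊆ I ∧ K ⊆ J ∧
    sigmaCone v I ∩ sigmaCone v J = sigmaCone v K
  max_cones : ∀ I ∈ Fam, ∃ J ∈ Fam, I ⊆ J ∧ J.card = r
  union_eq : (⋃ I ∈ (Fam : Set (Finset (Fin n))), sigmaCone v I) = coneC v

/-- `ψ` is strictly `Σ`-convex. -/
def StrictSigmaConvex {r n : ℕ} (v : Fin n → Fin r → ℤ) (Fam : Finset (Finset (Fin n)))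
    (ψ : (Fin r → ℝ) → ℝ) : Prop :=
  ∀ I ∈ Fam, I.card = r → ∃ ℓ : (Fin r → ℝ) →ₗ[ℝ] ℝ,
    (∀ x ∈ sigmaCone v I, ψ x = ℓ x) ∧ (∀ x ∈ coneC v, x ∉ sigmaCone v I → ℓ x < ψ x)

/-- The minimal cone of the fan containing a given point. -/
def IsMinConeOf {r n : ℕ} (v : Fin n → Fin r → ℤ) (Fam : Finset (Finset (Fin n)))
    (K : Finset (Fin n)) (w : Fin r → ℝ) : Prop :=
  K ∈ Fam ∧ w ∈ sigmaCone v K ∧ ∀ K' ∈ Fam, w ∈ sigmaCone v K' → K ⊆ K'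

/-- The cone `C_Σ` of the secondary fan corresponding to `Σ`. -/
def CSigma {r n : ℕ} (v : Fin n → Fin r → ℤ) (Fam : Finset (Finset (Fin n))) :
    Set (Fin n → ℝ) :=
  {η | ∀ I ∈ Fam, I.card = r → ∀ ℓ : (Fin r → ℝ) →ₗ[ℝ] ℝ,
    (∀ i ∈ I, ℓ (vR v i) = η i) → ∀ j, ℓ (vR v j) ≤ η j}

/-- The index set `L_{c,γ,σ;β}` of the Γ-series. -/
def Lset {r n : ℕ} (v : Fin n → Fin r → ℤ) (I0 : Finset (Fin n)) (β : Fin r → ℂ)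
    (c γ : Fin r → ℤ) : Set (Fin n → ℂ) :=
  {l | (∑ i, l i • vC v i) = β - intVecC c
    ∧ (∀ i ∉ I0, ∃ m : ℤ, l i = (m : ℂ))
    ∧ (∃ m : Fin n → ℤ,
        intVecC c + ∑ i ∈ I0ᶜ, l i • vC v i = -intVecC γ + ∑ i ∈ I0, (m i : ℂ) • vC v i)}

/-- An individual term `∏_i exp(l_i Log x_i)/Γ(1 + l_i)` of the Γ-series.  (Mathlib's
`Complex.Gamma` vanishes at the poles of `Γ`, so `1/Γ` is `0` there.) -/
def gammaTerm {n : ℕ} (l x : Fin n → ℂ) : ℂ :=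
  ∏ i, Complex.exp (l i * Complex.log (x i)) / Complex.Gamma (1 + l i)

/-- The region `R(ψ̂)`. -/
def Rregion {r n : ℕ} (v : Fin n → Fin r → ℤ) (Fam : Finset (Finset (Fin n)))
    (ψh : Fin n → ℝ) : Set (Fin n → ℂ) :=
  {x | (∀ i, x i ≠ 0 ∧ |Complex.arg (x i)| < Real.pi) ∧
    (fun i => -Real.log ‖x i‖ - ψh i) ∈ CSigma v Fam}

/-- The Γ-series `Φ^{γ,σ}_c` with parameter `β`. -/
def GammaSeries {r n : ℕ} (v : Fin n → Fin r → ℤ) (I0 : Finset (Fin n)) (β : Fin r → ℂ)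
    (γ c : Fin r → ℤ) (x : Fin n → ℂ) : ℂ :=
  ∑' l : (Lset v I0 β c γ), gammaTerm (l : Fin n → ℂ) x

/-- Absolute and uniform-on-compacts convergence of the Γ-series on a set `S`:
for every compact `K ⊆ S`, `∑_{l ∈ L} sup_{x ∈ K} |term_l(x)| < ∞`. -/
def ConvergesOn {r n : ℕ} (v : Fin n → Fin r → ℤ) (I0 : Finset (Fin n)) (β : Fin r → ℂ)
    (γ c : Fin r → ℤ) (S : Set (Fin n → ℂ)) : Prop :=
  ∀ K ⊆ S, IsCompact K →
    Summable (fun l : (Lset v I0 β c γ) =>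
      sSup ((fun x => ‖gammaTerm (l : Fin n → ℂ) x‖) '' K))

/-- `β ∈ ℂ^r` is generic: it lies in no proper affine subspace of `ℂ^r` defined over `ℚ`. -/
def GenericBeta {r : ℕ} (β : Fin r → ℂ) : Prop :=
  ∀ q : Fin r → ℚ, q ≠ 0 → ∀ q0 : ℚ, (∑ j, (q j : ℂ) * β j) ≠ (q0 : ℂ)

section Aux2
variable {r n : ℕ} {v : Fin n → Fin r → ℤ} {I0 : Finset (Fin n)}

def iotaMap {r n : ℕ} (I0 : Finset (Fin n)) (hcard : I0.card = r) : Fin r → Fin n :=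
  fun a => ((I0.orderIsoOfFin hcard a : {x // x ∈ I0}) : Fin n)

lemma iotaMap_mem (hcard : I0.card = r) (a : Fin r) : iotaMap I0 hcard a ∈ I0 :=
  (I0.orderIsoOfFin hcard a).2

lemma intVec_add' {r : ℕ} (a b : Fin r → ℤ) : intVec (a + b) = intVec a + intVec b := by
  funext j; simp [intVec]

lemma intVec_sub' {r : ℕ} (a b : Fin r → ℤ) : intVec (a - b) = intVec a - intVec b := by
  funext j; simp [intVec]

lemma intVec_inj' {r : ℕ} {a b : Fin r → ℤ} (h : intVec a = intVec b) : a = b := by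
  funext j
  have := congrFun h j
  simpa [intVec] using this

lemma sum_I0 (hcard : I0.card = r) {M : Type*} [AddCommMonoid M] (f : Fin n → M) :
    ∑ i ∈ I0, f i = ∑ a : Fin r, f (iotaMap I0 hcard a) := by
  rw [← Finset.sum_coe_sort I0 f]
  exact (Equiv.sum_comp (I0.orderIsoOfFin hcard).toEquiv (fun i => f i.1)).symm

lemma intVec_vSum' : intVec (vSum v I0) = ∑ i ∈ I0, vR v i := by
  funext j
  simp [intVec, vSum, vR, Finset.sum_apply]

lemma repr_sum (hcard : I0.card = r) (B : Module.Basis (Fin r) ℝ (Fin r → ℝ))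
    (hB : ∀ a, B a = vR v (iotaMap I0 hcard a))
    (f : Fin n → ℝ) (a : Fin r) :
    B.repr (∑ i ∈ I0, f i • vR v i) a = f (iotaMap I0 hcard a) := by
  rw [sum_I0 hcard]
  simp only [← hB]
  rw [Module.Basis.repr_sum_self]

lemma mem_sigmaCone_iff (hcard : I0.card = r) (B : Module.Basis (Fin r) ℝ (Fin r → ℝ))
    (hB : ∀ a, B a = vR v (iotaMap I0 hcard a)) (x : Fin r → ℝ) :
    x ∈ sigmaCone v I0 ↔ ∀ a, 0 ≤ B.repr x a := by
  constructor
  · rintro ⟨t, ht0, htI, rfl⟩ a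
    have hx : ∑ i, t i • vR v i = ∑ i ∈ I0, t i • vR v i := by
      rw [← Finset.sum_subset (Finset.subset_univ I0)]
      intro i _ hi
      rw [htI i hi, zero_smul]
    rw [hx, repr_sum hcard B hB]
    exact ht0 _
  · intro h
    refine ⟨fun i => if hi : i ∈ I0 then B.repr x ((I0.orderIsoOfFin hcard).symm ⟨i, hi⟩) else 0,
      fun i => ?_, fun i hi => by simp [hi], ?_⟩
    · by_cases hi : i ∈ I0 <;> simp [hi]
      exact h _
    · rw [← Finset.sum_subset (Finset.subset_univ I0) (by intro i _ hi; simp [hi])]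
      refine (B.ext_elem fun a => ?_).symm
      rw [repr_sum hcard B hB]
      rw [dif_pos (iotaMap_mem hcard a)]
      congr 1
      have he : (⟨iotaMap I0 hcard a, iotaMap_mem hcard a⟩ : {x // x ∈ I0})
          = I0.orderIsoOfFin hcard a := Subtype.ext rfl
      rw [he]
      exact (I0.orderIsoOfFin hcard).symm_apply_apply a

lemma interior_sigmaCone (hcard : I0.card = r) (B : Module.Basis (Fin r) ℝ (Fin r → ℝ))
    (hB : ∀ a, B a = vR v (iotaMap I0 hcard a)) :
    interior (sigmaCone v I0) = {x | ∀ a, 0 < B.repr x a} := by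
  have hset : sigmaCone v I0 = ⇑B.equivFun ⁻¹' (Set.univ.pi fun _ => Set.Ici (0:ℝ)) := by
    ext x
    rw [mem_sigmaCone_iff hcard B hB]
    simp [Module.Basis.equivFun_apply, Set.mem_pi, Pi.le_def]
  have hhomeo : ∃ h : (Fin r → ℝ) ≃ₜ (Fin r → ℝ), ⇑h = ⇑B.equivFun :=
    ⟨(B.equivFun.toContinuousLinearEquiv).toHomeomorph, rfl⟩
  obtain ⟨h, hh⟩ := hhomeo
  rw [hset, ← hh, ← h.preimage_interior, interior_pi_set Set.finite_univ]
  ext x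
  simp [hh, Module.Basis.equivFun_apply, Set.mem_pi, Pi.lt_def, Pi.le_def]

lemma coord_unique (g sa t : ℝ) (hg0 : 0 ≤ g) (hg1 : g < 1) (k : ℤ) (hk : t + g = k)
    (ht : 0 < t ∨ (t = 0 ∧ 0 < sa)) (hu : 0 < 1 - t ∨ (1 - t = 0 ∧ sa < 0)) :
    t = if g ≠ 0 then 1 - g else (if sa < 0 then 1 else 0) := by
  have ht0 : 0 ≤ t := by rcases ht with h | ⟨h, _⟩ <;> linarith
  have ht1 : t ≤ 1 := by rcases hu with h | ⟨h, _⟩ <;> linarith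
  have hk0 : (0:ℝ) ≤ (k:ℝ) := by linarith
  have hk2 : (k:ℝ) < 2 := by linarith
  have hk0' : 0 ≤ k := by exact_mod_cast hk0
  have hk2' : k < 2 := by exact_mod_cast hk2
  have hk01 : k = 0 ∨ k = 1 := by omega
  by_cases hg : g ≠ 0
  · rw [if_pos hg]
    have hgpos : 0 < g := lt_of_le_of_ne hg0 (Ne.symm hg)
    rcases hk01 with rfl | rfl
    · exfalso; push_cast at hk; linarith
    · push_cast at hk; linarith
  · rw [if_neg hg]
    push_neg at hg
    subst hg
    rcases hk01 with rfl | rfl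
    · have ht' : t = 0 := by push_cast at hk; linarith
      rcases ht with h | ⟨_, hsa⟩
      · linarith
      · rw [if_neg (by linarith : ¬ sa < 0)]; exact ht'
    · have ht' : t = 1 := by push_cast at hk; linarith
      rcases hu with h | ⟨_, hsa⟩
      · linarith
      · rw [if_pos hsa]; exact ht'

lemma eventually_coords_iff (r : ℕ) (ty tw : Fin r → ℝ) :
    (∀ᶠ ε in nhdsWithin (0:ℝ) (Set.Ioi 0), ∀ a, 0 < ty a + ε * tw a) ↔
    ∀ a, 0 < ty a ∨ (ty a = 0 ∧ 0 < tw a) := by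
  constructor
  · intro h a
    by_contra hcon
    push_neg at hcon
    obtain ⟨h1, h2⟩ := hcon
    rcases lt_or_eq_of_le h1 with hlt | heq
    · set δ : ℝ := (-(ty a)) / (|tw a| + 1) with hδ
      have hδpos : 0 < δ := by
        apply div_pos (by linarith) (by positivity)
      have hmem : Set.Ioo (0:ℝ) δ ∈ nhdsWithin (0:ℝ) (Set.Ioi 0) :=
        Ioo_mem_nhdsGT_of_mem ⟨le_refl 0, hδpos⟩
      obtain ⟨ε, hP, hε0, hεδ⟩ := (h.and (Filter.eventually_of_mem hmem fun x hx => hx)).exists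
      have hPa := hP a
      have c1 : ε * tw a ≤ ε * |tw a| := mul_le_mul_of_nonneg_left (le_abs_self _) hε0.le
      have c2 : ε * |tw a| ≤ ε * (|tw a| + 1) := by nlinarith [abs_nonneg (tw a)]
      have c3 : ε * (|tw a| + 1) < δ * (|tw a| + 1) :=
        mul_lt_mul_of_pos_right hεδ (by positivity)
      have c4 : δ * (|tw a| + 1) = -(ty a) := by
        rw [hδ]; field_simp
      linarith
    · obtain ⟨ε, hP, hε0⟩ :=
        (h.and (Filter.eventually_of_mem self_mem_nhdsWithin fun x hx => hx)).exists
      have hPa := hP a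
      rw [heq] at hPa
      have hε0' : (0:ℝ) < ε := hε0
      have htw : tw a ≤ 0 := h2 heq
      nlinarith
  · intro h
    rw [Filter.eventually_all]
    intro a
    rcases h a with hty | ⟨hty, htw⟩
    · have htend : Filter.Tendsto (fun ε : ℝ => ty a + ε * tw a)
          (nhdsWithin (0:ℝ) (Set.Ioi 0)) (nhds (ty a)) := by
        have : Filter.Tendsto (fun ε : ℝ => ty a + ε * tw a) (nhds 0) (nhds (ty a + 0 * tw a)) :=
          (continuous_const.add (continuous_id.mul continuous_const)).tendsto 0
        simpa using this.mono_left nhdsWithin_le_nhds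
      exact htend.eventually (eventually_gt_nhds hty)
    · filter_upwards [self_mem_nhdsWithin] with ε hε
      have : (0:ℝ) < ε := hε
      rw [hty]
      nlinarith

end Aux2

theorem statement13
    (r n : ℕ) (hr : 1 ≤ r) (hn : r ≤ n)
    (deg : (Fin r → ℝ) →ₗ[ℝ] ℝ)
    (hdegInt : ∀ m : Fin r → ℤ, ∃ k : ℤ, deg (intVec m) = (k : ℝ))
    (v : Fin n → Fin r → ℤ)
    (hv_inj : Function.Injective v)
    (hv_span : Submodule.span ℝ (Set.range (vR v)) = ⊤)
    (hv_deg : ∀ i, deg (vR v i) = 1)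
    (v0 : Fin r → ℝ) (hv0mem : v0 ∈ interior (coneC v)) (hv0gen : GenericVec v0)
    (Fam : Finset (Finset (Fin n))) (hFam : IsFan v Fam)
    (I0 : Finset (Fin n)) (hI0F : I0 ∈ Fam) (hI0card : I0.card = r)
    (s : Fin n → ℝ) (hs : v0 = ∑ i ∈ I0, s i • vR v i)
    (γ : Fin r → ℤ)
    (γc : Fin n → ℝ) (hγc : ∀ i ∈ I0, 0 ≤ γc i ∧ γc i < 1)
    (hγlat : ∃ m : Fin n → ℤ,
      intVec γ - ∑ i ∈ I0, γc i • vR v i = ∑ i ∈ I0, (m i : ℝ) • vR v i) :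
    (∃! p : (Fin r → ℤ) × (Fin r → ℤ),
        p.1 + p.2 = vSum v I0 ∧
        (∃ m : Fin n → ℤ, intVec (p.1 + γ) = ∑ i ∈ I0, (m i : ℝ) • vR v i) ∧
        (∀ᶠ ε in nhdsWithin (0 : ℝ) (Set.Ioi 0),
          intVec p.1 + ε • v0 ∈ interior (sigmaCone v I0) ∧
          intVec p.2 - ε • v0 ∈ interior (sigmaCone v I0))) ∧
    (∀ p : (Fin r → ℤ) × (Fin r → ℤ),
        (p.1 + p.2 = vSum v I0 ∧
         (∃ m : Fin n → ℤ, intVec (p.1 + γ) = ∑ i ∈ I0, (m i : ℝ) • vR v i) ∧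
         (∀ᶠ ε in nhdsWithin (0 : ℝ) (Set.Ioi 0),
           intVec p.1 + ε • v0 ∈ interior (sigmaCone v I0) ∧
           intVec p.2 - ε • v0 ∈ interior (sigmaCone v I0))) →
        intVec p.1 = (∑ i ∈ I0.filter (fun i => γc i ≠ 0), (1 - γc i) • vR v i)
            + (∑ i ∈ I0.filter (fun i => γc i = 0 ∧ s i < 0), vR v i) ∧
        intVec p.2 = (∑ i ∈ I0.filter (fun i => γc i ≠ 0), γc i • vR v i)
            + (∑ i ∈ I0.filter (fun i => γc i = 0 ∧ 0 < s i), vR v i)) := by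
  classical
  -- the basis
  have hindep0 := hFam.indep I0 hI0F
  have hindep : LinearIndependent ℝ (fun a : Fin r => vR v (iotaMap I0 hI0card a)) :=
    hindep0.comp (fun a => I0.orderIsoOfFin hI0card a)
      (I0.orderIsoOfFin hI0card).toEquiv.injective
  have hcardeq : Fintype.card (Fin r) = Module.finrank ℝ (Fin r → ℝ) := by simp
  have hrne : Nonempty (Fin r) := ⟨⟨0, hr⟩⟩
  let B : Module.Basis (Fin r) ℝ (Fin r → ℝ) := basisOfLinearIndependentOfCardEqFinrank hindep hcardeq
  have hB : ∀ a, B a = vR v (iotaMap I0 hI0card a) := fun a =>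
    congrFun (coe_basisOfLinearIndependentOfCardEqFinrank hindep hcardeq) a
  have hint := interior_sigmaCone hI0card B hB
  -- s does not vanish on I0
  have s_ne : ∀ i ∈ I0, s i ≠ 0 := by
    intro i0 hi0 hs0
    have hImage : intVec '' (v '' (↑(I0.erase i0))) = vR v '' ↑(I0.erase i0) := by
      rw [← Set.image_comp]; rfl
    have hspan_ne : Submodule.span ℝ (intVec '' (v '' (↑(I0.erase i0)))) ≠ ⊤ := by
      intro htop
      have h1 : Module.finrank ℝ
          ↥(Submodule.span ℝ (vR v '' ↑(I0.erase i0))) ≤ (I0.erase i0).card := by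
        rw [← Finset.coe_image]
        exact le_trans (finrank_span_finset_le_card _) Finset.card_image_le
      rw [hImage] at htop
      rw [htop, finrank_top] at h1
      have h2 : Module.finrank ℝ (Fin r → ℝ) = r := by simp
      rw [h2] at h1
      have h3 : (I0.erase i0).card = r - 1 := by rw [Finset.card_erase_of_mem hi0, hI0card]
      omega
    refine hv0gen _ hspan_ne ?_
    rw [hImage, hs]
    have hsplit : ∑ i ∈ I0, s i • vR v i = ∑ i ∈ I0.erase i0, s i • vR v i := by
      rw [← Finset.add_sum_erase I0 _ hi0, hs0, zero_smul, zero_add]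
    rw [hsplit]
    exact Submodule.sum_smul_mem _ _ fun i hi =>
      Submodule.subset_span (Set.mem_image_of_mem _ (by exact_mod_cast hi))
  have s_ne' : ∀ a, s (iotaMap I0 hI0card a) ≠ 0 := fun a => s_ne _ (iotaMap_mem hI0card a)
  -- coordinates of v0
  have hv0c : ∀ a, B.repr v0 a = s (iotaMap I0 hI0card a) := by
    intro a; rw [hs, repr_sum hI0card B hB]
  -- coordinates of vSum
  have hvSumc : ∀ a, B.repr (intVec (vSum v I0)) a = 1 := by
    intro a
    rw [intVec_vSum']
    have h1 : (∑ i ∈ I0, vR v i) = ∑ i ∈ I0, (fun _ : Fin n => (1:ℝ)) i • vR v i := by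
      simp
    rw [h1, repr_sum hI0card B hB]
  -- the coefficient functions
  set f : Fin n → ℝ := fun i =>
    (if γc i ≠ 0 then 1 - γc i else 0) + (if γc i = 0 ∧ s i < 0 then 1 else 0) with hf
  set g : Fin n → ℝ := fun i =>
    (if γc i ≠ 0 then γc i else 0) + (if γc i = 0 ∧ 0 < s i then 1 else 0) with hg
  have hformulaC : (∑ i ∈ I0.filter (fun i => γc i ≠ 0), (1 - γc i) • vR v i)
      + (∑ i ∈ I0.filter (fun i => γc i = 0 ∧ s i < 0), vR v i) = ∑ i ∈ I0, f i • vR v i := by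
    rw [Finset.sum_filter, Finset.sum_filter, ← Finset.sum_add_distrib]
    refine Finset.sum_congr rfl fun i _ => ?_
    by_cases h1 : γc i ≠ 0
    · simp [hf, h1]
    · push_neg at h1
      by_cases h2 : s i < 0 <;> simp [hf, h1, h2]
  have hformulaD : (∑ i ∈ I0.filter (fun i => γc i ≠ 0), γc i • vR v i)
      + (∑ i ∈ I0.filter (fun i => γc i = 0 ∧ 0 < s i), vR v i) = ∑ i ∈ I0, g i • vR v i := by
    rw [Finset.sum_filter, Finset.sum_filter, ← Finset.sum_add_distrib]
    refine Finset.sum_congr rfl fun i _ => ?_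
    by_cases h1 : γc i ≠ 0
    · simp [hg, h1]
    · push_neg at h1
      by_cases h2 : 0 < s i <;> simp [hg, h1, h2]
  have hfg : ∀ i ∈ I0, f i + g i = 1 := by
    intro i hi
    by_cases h1 : γc i = 0
    · rcases (s_ne i hi).lt_or_gt with h2 | h2
      · simp [hf, hg, h1, h2, asymm h2]
      · simp [hf, hg, h1, h2, asymm h2]
    · simp [hf, hg, h1]
  -- lattice data
  obtain ⟨m0, hm0⟩ := hγlat
  have hγR : intVec γ = ∑ i ∈ I0, (γc i + (m0 i : ℝ)) • vR v i := by
    have h1 : intVec γ = (∑ i ∈ I0, (m0 i : ℝ) • vR v i) + ∑ i ∈ I0, γc i • vR v i :=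
      sub_eq_iff_eq_add.mp hm0
    rw [h1, ← Finset.sum_add_distrib]
    refine Finset.sum_congr rfl fun i _ => ?_
    rw [← add_smul]; ring_nf
  have hlatt : ∀ c : Fin r → ℤ,
      (∃ m : Fin n → ℤ, intVec (c + γ) = ∑ i ∈ I0, (m i : ℝ) • vR v i) →
      ∀ a, ∃ k : ℤ, B.repr (intVec c) a + γc (iotaMap I0 hI0card a) = (k : ℝ) := by
    rintro c ⟨m, hm⟩ a
    have hc : intVec c = ∑ i ∈ I0, ((m i : ℝ) - (m0 i : ℝ) - γc i) • vR v i := by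
      have h1 : intVec c = intVec (c + γ) - intVec γ := by rw [intVec_add']; ring
      rw [h1, hm, hγR, ← Finset.sum_sub_distrib]
      refine Finset.sum_congr rfl fun i _ => ?_
      rw [← sub_smul]; congr 1; ring
    rw [hc, repr_sum hI0card B hB]
    exact ⟨m (iotaMap I0 hI0card a) - m0 (iotaMap I0 hI0card a), by push_cast; ring⟩
  -- the value of f on I0
  have hgval : ∀ i ∈ I0,
      g i = if γc i ≠ 0 then γc i else (if 0 < s i then 1 else 0) := by
    intro i hi
    by_cases h1 : γc i ≠ 0
    · simp [hg, h1]
    · push_neg at h1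
      by_cases h2 : 0 < s i <;> simp [hg, h1, h2]
  have hfval : ∀ i ∈ I0,
      f i = if γc i ≠ 0 then 1 - γc i else (if s i < 0 then 1 else 0) := by
    intro i hi
    by_cases h1 : γc i ≠ 0
    · simp [hf, h1]
    · push_neg at h1
      by_cases h2 : s i < 0 <;> simp [hf, h1, h2]
  -- main characterization
  have hchar : ∀ p : (Fin r → ℤ) × (Fin r → ℤ),
      (p.1 + p.2 = vSum v I0 ∧
       (∃ m : Fin n → ℤ, intVec (p.1 + γ) = ∑ i ∈ I0, (m i : ℝ) • vR v i) ∧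
       (∀ᶠ ε in nhdsWithin (0 : ℝ) (Set.Ioi 0),
         intVec p.1 + ε • v0 ∈ interior (sigmaCone v I0) ∧
         intVec p.2 - ε • v0 ∈ interior (sigmaCone v I0))) →
      intVec p.1 = ∑ i ∈ I0, f i • vR v i ∧ intVec p.2 = ∑ i ∈ I0, g i • vR v i := by
    rintro ⟨c, d⟩ ⟨hsum, hlat, hev⟩
    have hsumR : intVec c + intVec d = intVec (vSum v I0) := by
      rw [← intVec_add', hsum]
    have hcd : ∀ a, B.repr (intVec c) a + B.repr (intVec d) a = 1 := by
      intro a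
      have h := congrArg (fun x => (B.repr x) a) hsumR
      simp only [map_add, Finsupp.coe_add, Pi.add_apply] at h
      rw [h, hvSumc a]
    have hev1 : ∀ᶠ ε in nhdsWithin (0:ℝ) (Set.Ioi 0),
        intVec c + ε • v0 ∈ interior (sigmaCone v I0) := hev.mono fun ε h => h.1
    have hev2 : ∀ᶠ ε in nhdsWithin (0:ℝ) (Set.Ioi 0),
        intVec d - ε • v0 ∈ interior (sigmaCone v I0) := hev.mono fun ε h => h.2
    have key1 : ∀ a, 0 < B.repr (intVec c) a ∨
        (B.repr (intVec c) a = 0 ∧ 0 < s (iotaMap I0 hI0card a)) := by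
      refine (eventually_coords_iff r (fun a => B.repr (intVec c) a)
        (fun a => s (iotaMap I0 hI0card a))).mp ?_
      refine hev1.mono fun ε hmem a => ?_
      rw [hint] at hmem
      have h2 := hmem a
      simpa [map_add, map_smul, Finsupp.coe_add, Finsupp.coe_smul, Pi.add_apply,
        Pi.smul_apply, smul_eq_mul, hv0c a] using h2
    have key2 : ∀ a, 0 < B.repr (intVec d) a ∨
        (B.repr (intVec d) a = 0 ∧ 0 < -(s (iotaMap I0 hI0card a))) := by
      refine (eventually_coords_iff r (fun a => B.repr (intVec d) a)
        (fun a => -(s (iotaMap I0 hI0card a)))).mp ?_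
      refine hev2.mono fun ε hmem a => ?_
      rw [hint] at hmem
      have h2 := hmem a
      have h3 : B.repr (intVec d - ε • v0) a
          = B.repr (intVec d) a + ε * (-(s (iotaMap I0 hI0card a))) := by
        simp [map_sub, map_smul, hv0c a]
        ring
      rw [h3] at h2
      exact h2
    have hcoordc : ∀ a, B.repr (intVec c) a = f (iotaMap I0 hI0card a) := by
      intro a
      obtain ⟨k, hk⟩ := hlatt c hlat a
      have hγca := hγc _ (iotaMap_mem hI0card a)
      have hu' : 0 < 1 - B.repr (intVec c) a ∨
          (1 - B.repr (intVec c) a = 0 ∧ s (iotaMap I0 hI0card a) < 0) := by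
        have hcda := hcd a
        rcases key2 a with h | ⟨h1, h2⟩
        · left; linarith
        · right; constructor
          · linarith
          · linarith
      rw [hfval _ (iotaMap_mem hI0card a)]
      exact coord_unique _ _ _ hγca.1 hγca.2 k hk (key1 a) hu'
    have hc : intVec c = ∑ i ∈ I0, f i • vR v i := by
      refine B.ext_elem fun a => ?_
      rw [hcoordc a, repr_sum hI0card B hB]
    refine ⟨hc, ?_⟩
    refine B.ext_elem fun a => ?_
    rw [repr_sum hI0card B hB]
    have h1 := hcd a
    rw [hcoordc a] at h1
    have h2 := hfg _ (iotaMap_mem hI0card a)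
    linarith
  -- the explicit pair
  set cInt : Fin r → ℤ := (∑ i ∈ I0.filter (fun i => γc i ≠ 0), v i)
    + (∑ i ∈ I0.filter (fun i => γc i = 0 ∧ s i < 0), v i)
    + (∑ i ∈ I0, m0 i • v i) - γ with hcInt
  set dInt : Fin r → ℤ := vSum v I0 - cInt with hdInt
  have hsumInt : cInt + dInt = vSum v I0 := by rw [hdInt]; ring
  -- real version of cInt
  have hintVecSum : ∀ (T : Finset (Fin n)) (w : Fin n → Fin r → ℤ),
      intVec (∑ i ∈ T, w i) = ∑ i ∈ T, intVec (w i) := by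
    intro T w
    funext j
    simp [intVec, Finset.sum_apply]
  have hcR : intVec cInt = ∑ i ∈ I0, f i • vR v i := by
    have h1 : intVec cInt = (∑ i ∈ I0.filter (fun i => γc i ≠ 0), vR v i)
        + (∑ i ∈ I0.filter (fun i => γc i = 0 ∧ s i < 0), vR v i)
        + (∑ i ∈ I0, (m0 i : ℝ) • vR v i) - intVec γ := by
      rw [hcInt, intVec_sub', intVec_add', intVec_add', hintVecSum, hintVecSum, hintVecSum]
      have e2 : ∀ i : Fin n, intVec (m0 i • v i) = (m0 i : ℝ) • vR v i := fun i => by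
        funext j; simp [intVec, vR]
      simp only [e2]
      rfl
    rw [h1, hγR]
    rw [Finset.sum_filter, Finset.sum_filter]
    have h2 : ∀ i ∈ I0, ((if γc i ≠ 0 then vR v i else 0)
        + (if γc i = 0 ∧ s i < 0 then vR v i else 0))
        + ((m0 i : ℝ) • vR v i - (γc i + (m0 i : ℝ)) • vR v i) = f i • vR v i := by
      intro i _
      simp only [hf]
      by_cases h3 : γc i ≠ 0
      · have hne : ¬ (γc i = 0 ∧ s i < 0) := fun hc => h3 hc.1
        rw [if_pos h3, if_neg hne, if_pos h3, if_neg hne]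
        module
      · push_neg at h3
        by_cases h4 : s i < 0
        · have hyes : γc i = 0 ∧ s i < 0 := ⟨h3, h4⟩
          rw [if_neg (by simpa using h3), if_pos hyes, if_neg (by simpa using h3), if_pos hyes,
            h3]
          module
        · have hno : ¬ (γc i = 0 ∧ s i < 0) := fun hc => h4 hc.2
          rw [if_neg (by simpa using h3), if_neg hno, if_neg (by simpa using h3), if_neg hno,
            h3]
          module
    calc (∑ i ∈ I0, if γc i ≠ 0 then vR v i else 0)
        + (∑ i ∈ I0, if γc i = 0 ∧ s i < 0 then vR v i else 0)
        + (∑ i ∈ I0, (m0 i : ℝ) • vR v i) - ∑ i ∈ I0, (γc i + (m0 i : ℝ)) • vR v i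
        = ∑ i ∈ I0, (((if γc i ≠ 0 then vR v i else 0)
            + (if γc i = 0 ∧ s i < 0 then vR v i else 0))
            + ((m0 i : ℝ) • vR v i - (γc i + (m0 i : ℝ)) • vR v i)) := by
          rw [Finset.sum_add_distrib, Finset.sum_add_distrib, Finset.sum_sub_distrib]
          abel
      _ = ∑ i ∈ I0, f i • vR v i := Finset.sum_congr rfl h2
  have hdR : intVec dInt = ∑ i ∈ I0, g i • vR v i := by
    rw [hdInt, intVec_sub', intVec_vSum', hcR, ← Finset.sum_sub_distrib]
    refine Finset.sum_congr rfl fun i hi => ?_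
    have h1 := hfg i hi
    have h2 : g i = 1 - f i := by linarith
    rw [h2, sub_smul, one_smul]
  -- the lattice condition for cInt
  have hlatInt : ∃ m : Fin n → ℤ, intVec (cInt + γ) = ∑ i ∈ I0, (m i : ℝ) • vR v i := by
    refine ⟨fun i => (if γc i ≠ 0 then 1 else if s i < 0 then 1 else 0) + m0 i, ?_⟩
    rw [intVec_add', hcR, hγR, ← Finset.sum_add_distrib]
    refine Finset.sum_congr rfl fun i hi => ?_
    rw [← add_smul]
    congr 1
    rw [hfval i hi]
    push_cast
    split_ifs with ha hb <;> try ring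
    all_goals (push_neg at ha; rw [ha]; ring)
  -- the sign conditions for cInt and dInt
  have hsignC : ∀ a, 0 < f (iotaMap I0 hI0card a) ∨
      (f (iotaMap I0 hI0card a) = 0 ∧ 0 < s (iotaMap I0 hI0card a)) := by
    intro a
    set i := iotaMap I0 hI0card a
    have hγca := hγc i (iotaMap_mem hI0card a)
    by_cases h1 : γc i ≠ 0
    · left
      rw [hfval i (iotaMap_mem hI0card a), if_pos h1]
      linarith [hγca.2]
    · push_neg at h1
      by_cases h2 : s i < 0
      · left
        rw [hfval i (iotaMap_mem hI0card a), if_neg (by simpa using h1), if_pos h2]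
        norm_num
      · right
        constructor
        · rw [hfval i (iotaMap_mem hI0card a), if_neg (by simpa using h1), if_neg h2]
        · exact lt_of_le_of_ne (not_lt.mp h2) (Ne.symm (s_ne' a))
  have hsignD : ∀ a, 0 < g (iotaMap I0 hI0card a) ∨
      (g (iotaMap I0 hI0card a) = 0 ∧ 0 < -(s (iotaMap I0 hI0card a))) := by
    intro a
    set i := iotaMap I0 hI0card a
    have hγca := hγc i (iotaMap_mem hI0card a)
    rw [hgval i (iotaMap_mem hI0card a)]
    by_cases h1 : γc i ≠ 0
    · left
      rw [if_pos h1]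
      exact lt_of_le_of_ne hγca.1 (Ne.symm h1)
    · push_neg at h1
      by_cases h2 : 0 < s i
      · left
        rw [if_neg (by simpa using h1), if_pos h2]
        norm_num
      · right
        have h3 : s i < 0 := lt_of_le_of_ne (not_lt.mp h2) (s_ne' a)
        refine ⟨?_, by linarith⟩
        rw [if_neg (by simpa using h1), if_neg h2]
  -- coordinates of cInt and dInt
  have hcCoord : ∀ a, B.repr (intVec cInt) a = f (iotaMap I0 hI0card a) := by
    intro a; rw [hcR, repr_sum hI0card B hB]
  have hdCoord : ∀ a, B.repr (intVec dInt) a = g (iotaMap I0 hI0card a) := by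
    intro a; rw [hdR, repr_sum hI0card B hB]
  -- the eventual condition for (cInt, dInt)
  have hevInt : ∀ᶠ ε in nhdsWithin (0 : ℝ) (Set.Ioi 0),
      intVec cInt + ε • v0 ∈ interior (sigmaCone v I0) ∧
      intVec dInt - ε • v0 ∈ interior (sigmaCone v I0) := by
    have hA := (eventually_coords_iff r (fun a => f (iotaMap I0 hI0card a))
      (fun a => s (iotaMap I0 hI0card a))).mpr hsignC
    have hBv := (eventually_coords_iff r (fun a => g (iotaMap I0 hI0card a))
      (fun a => -(s (iotaMap I0 hI0card a)))).mpr hsignD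
    refine (hA.and hBv).mono fun ε ⟨h1, h2⟩ => ⟨?_, ?_⟩
    · rw [hint]
      intro a
      have h3 := h1 a
      simp only [map_add, map_smul, Finsupp.coe_add, Finsupp.coe_smul, Pi.add_apply,
        Pi.smul_apply, smul_eq_mul, hcCoord a, hv0c a]
      exact h3
    · rw [hint]
      intro a
      have h3 := h2 a
      have h4 : B.repr (intVec dInt - ε • v0) a
          = g (iotaMap I0 hI0card a) + ε * (-(s (iotaMap I0 hI0card a))) := by
        simp [map_sub, map_smul, hv0c a, hdCoord a]
        ring
      rw [h4]
      exact h3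
  -- conclusion
  constructor
  · refine ⟨(cInt, dInt), ⟨hsumInt, hlatInt, hevInt⟩, ?_⟩
    intro q hq
    have h1 := hchar q hq
    have hq1 : q.1 = cInt := intVec_inj' (by rw [h1.1, ← hcR])
    have hq2 : q.2 = dInt := intVec_inj' (by rw [h1.2, ← hdR])
    exact Prod.ext hq1 hq2
  · intro p hp
    have h1 := hchar p hp
    constructor
    · rw [hformulaC]; exact h1.1
    · rw [hformulaD]; exact h1.2

end BBGKZ
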